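/- Let 1 ≤ n < d, c > 0, ε > 0. Let E₀ ⊂ ℝ^d be an n-ADR set with Hⁿ(E₀) ≥ c, let E₁ ⊂ E₀ ∩ B(0,1) be an Hⁿ-measurable subset, and define E_{1,ε} := {x ∈ E₁ : Hⁿ(E₁ ∩ B(x, r_x)) ≤ ε r_xⁿ for some radius 0 < r_x ≤ 1}. Then Hⁿ(E_{1,ε}) ≤ Kε, where K depends only on n, d, c and the ADR constants of E₀. -/

import Mathlib

open MeasureTheory Metric Module Set
open scoped ENNReal NNReal RealInnerProductSpace

noncomputable section

/-- Euclidean space `ℝ^d`. -/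
abbrev Euc (d : ℕ) : Type := EuclideanSpace ℝ (Fin d)

/-- Orthogonal projection onto a subspace, as a map `ℝ^d → ℝ^d`. -/
noncomputable def projCLM {d : ℕ} (V : Submodule ℝ (Euc d)) : Euc d →L[ℝ] Euc d :=
  V.subtypeL.comp V.orthogonalProjectionOnto

/-- `E` is `n`-Ahlfors–David regular with constants `C₁ ≤ C₂`. -/
def IsADR {d : ℕ} (n : ℕ) (C₁ C₂ : ℝ) (E : Set (Euc d)) : Prop :=
  0 < C₁ ∧ C₁ ≤ C₂ ∧ ∀ x ∈ E, ∀ r : ℝ, 0 < r → ENNReal.ofReal r ≤ EMetric.diam E →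
    ENNReal.ofReal (C₁ * r ^ n) ≤ μH[n] (E ∩ closedBall x r) ∧
      μH[n] (E ∩ closedBall x r) ≤ ENNReal.ofReal (C₂ * r ^ n)

/-- `Γ` is an `n`-dimensional Lipschitz graph with Lipschitz constant at most `M`:
`Γ = {p + A p : p ∈ P}` for an `n`-dimensional subspace `P` and `M`-Lipschitz `A : P → P^⊥`. -/
def IsLipGraph {d : ℕ} (n : ℕ) (M : ℝ≥0) (Γ : Set (Euc d)) : Prop :=
  ∃ (P : Submodule ℝ (Euc d)) (A : P → Pᗮ), finrank ℝ P = n ∧ LipschitzWith M A ∧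
    Γ = {x | ∃ p : P, x = (p : Euc d) + (A p : Euc d)}

/-- `E` has big pieces of Lipschitz graphs with constants `M` and `δ`. -/
def HasBPLG {d : ℕ} (n : ℕ) (M : ℝ≥0) (δ : ℝ) (E : Set (Euc d)) : Prop :=
  0 < δ ∧ ∀ x ∈ E, ∀ r : ℝ, 0 < r → ENNReal.ofReal r ≤ EMetric.diam E →
    ∃ Γ : Set (Euc d), IsLipGraph n M Γ ∧
      ENNReal.ofReal (δ * r ^ n) ≤ μH[n] (E ∩ Γ ∩ closedBall x r)

/-- The coordinate subspace `ℝⁿ × {0} ⊆ ℝ^d`. -/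
def coordSubspace (d n : ℕ) : Submodule ℝ (Euc d) where
  carrier := {x | ∀ i : Fin d, n ≤ (i : ℕ) → x i = 0}
  add_mem' := by
    intro a b ha hb i hi
    simp [PiLp.add_apply, ha i hi, hb i hi]
  zero_mem' := by intro i hi; rfl
  smul_mem' := by
    intro c a ha i hi
    simp [PiLp.smul_apply, ha i hi]

/-- The closed ball of radius `ρ` around `W` in the Grassmannian `G(d,n)`, realised as a set
of subspaces of `ℝ^d`, with the metric `‖V - W‖ = ‖π_V - π_W‖` (operator norm). -/
def grBall {d : ℕ} (n : ℕ) (W : Submodule ℝ (Euc d)) (ρ : ℝ) : Set (Submodule ℝ (Euc d)) :=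
  {V | finrank ℝ V = n ∧ ‖projCLM V - projCLM W‖ ≤ ρ}

/-- The Borel σ-algebra on subspaces of `ℝ^d`, induced by `V ↦ π_V`. -/
instance grassMeasurableSpace (d : ℕ) : MeasurableSpace (Submodule ℝ (Euc d)) :=
  MeasurableSpace.comap (fun V => projCLM V) (borel (Euc d →L[ℝ] Euc d))

/-- The orthogonal group `O(d)`. -/
abbrev OG (d : ℕ) := Matrix.orthogonalGroup (Fin d) ℝ

instance (d : ℕ) : MeasurableSpace (OG d) := borel _

/-- `μ` is the Haar probability measure on the orthogonal group `O(d)`: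
a left-invariant Borel probability measure. -/
def IsHaarProb {d : ℕ} (μ : Measure (OG d)) : Prop :=
  IsProbabilityMeasure μ ∧ ∀ g : OG d, Measure.map (fun h => g * h) μ = μ

/-- The measure `γ_{d,n}` on the Grassmannian: the pushforward of the Haar probability
measure `μ` on `O(d)` under the map `g ↦ g(ℝⁿ × {0})`. -/
def grassmannOf {d : ℕ} (n : ℕ) (μ : Measure (OG d)) : Measure (Submodule ℝ (Euc d)) :=
  Measure.map
    (fun g : OG d => (coordSubspace d n).map
      (Matrix.toEuclideanLin (g : Matrix (Fin d) (Fin d) ℝ))) μ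

/-- The pushforward `π_{V♯}(Hⁿ|_E)` of `Hⁿ` restricted to `E` under the orthogonal
projection onto `V`. -/
def projPush {d : ℕ} (n : ℕ) (E : Set (Euc d)) (V : Submodule ℝ (Euc d)) : Measure (Euc d) :=
  Measure.map (projCLM V) (μH[n].restrict E)

/-- `Hⁿ` on the subspace `V`. -/
def hausdorffOn {d : ℕ} (n : ℕ) (V : Submodule ℝ (Euc d)) : Measure (Euc d) :=
  μH[n].restrict (V : Set (Euc d))

/-- The squared `L²(V)`-norm of the Radon–Nikodym derivative of `π_{V♯}(Hⁿ|_E)` with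
respect to `Hⁿ` on `V`. -/
def pushL2sq {d : ℕ} (n : ℕ) (E : Set (Euc d)) (V : Submodule ℝ (Euc d)) : ℝ≥0∞ :=
  ∫⁻ z, ((projPush n E V).rnDeriv (hausdorffOn n V) z) ^ 2 ∂(hausdorffOn n V)

/-- `π_{V♯}(Hⁿ|_E) ∈ L²(V)`: the pushforward is absolutely continuous with respect to `Hⁿ`
on `V`, with square-integrable density. -/
def MemL2 {d : ℕ} (n : ℕ) (E : Set (Euc d)) (V : Submodule ℝ (Euc d)) : Prop :=
  projPush n E V ≪ hausdorffOn n V ∧ pushL2sq n E V < ∞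

/-- The (two-sided) cone `X(x, V, α) = {y : |π_{V^⊥}(x - y)| ≤ α |x - y|}`. -/
def cone {d : ℕ} (V : Submodule ℝ (Euc d)) (x : Euc d) (α : ℝ) : Set (Euc d) :=
  {y | ‖projCLM Vᗮ (x - y)‖ ≤ α * ‖x - y‖}

/-- The truncated cone `X(x, V, α, R, r)`. -/
def coneAnn {d : ℕ} (V : Submodule ℝ (Euc d)) (x : Euc d) (α R r : ℝ) : Set (Euc d) :=
  cone V x α ∩ (closedBall x R \ ball x r)

/-- The vertical cone `X(x, α) := X(x, {0} × ℝ^{d-n}, α) = {y : |π_{ℝⁿ×{0}}(x-y)| ≤ α|x-y|}`. -/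
def vertCone {d : ℕ} (n : ℕ) (x : Euc d) (α : ℝ) : Set (Euc d) :=
  {y | ‖projCLM (coordSubspace d n) (x - y)‖ ≤ α * ‖x - y‖}

/-- The truncated vertical cone `X(x, α, R, r)`. -/
def vertConeAnn {d : ℕ} (n : ℕ) (x : Euc d) (α R r : ℝ) : Set (Euc d) :=
  vertCone n x α ∩ (closedBall x R \ ball x r)

/-- `E` satisfies the `n`-dimensional `(θ, M)`-property: for every `x ∈ E` at most `M`
dyadic scales `j` have `X(x, θ, 2^{-j}, 2^{-j-1}) ∩ E ≠ ∅`. -/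
def ThetaMProp {d : ℕ} (n : ℕ) (θ : ℝ) (M : ℕ) (E : Set (Euc d)) : Prop :=
  ∀ x ∈ E,
    {j : ℤ | (vertConeAnn n x θ (2 ^ (-j)) (2 ^ (-j - 1)) ∩ E).Nonempty}.Finite ∧
    {j : ℤ | (vertConeAnn n x θ (2 ^ (-j)) (2 ^ (-j - 1)) ∩ E).Nonempty}.ncard ≤ M

/-- The one-sided cone `X⁺(x, w, α)` in direction `w`. -/
def oneSidedCone {d : ℕ} (w : Euc d) (x : Euc d) (α : ℝ) : Set (Euc d) :=
  {y | ‖projCLM (Submodule.span ℝ {w})ᗮ (x - y)‖ ≤ α * ‖x - y‖ ∧ 0 ≤ ⟪y - x, w⟫}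

/-- The truncated one-sided cone `X⁺(x, w, α, R, r)`. -/
def oneSidedConeAnn {d : ℕ} (w : Euc d) (x : Euc d) (α R r : ℝ) : Set (Euc d) :=
  oneSidedCone w x α ∩ (closedBall x R \ ball x r)

/-- Combining `x ∈ ℝⁿ` and `y ∈ ℝ^{d-n}` into a point of `ℝ^d = ℝⁿ × ℝ^{d-n}`. -/
def pairFun {d n : ℕ} (x : Euc n) (y : Euc (d - n)) : Euc d :=
  WithLp.toLp 2 (fun (i : Fin d) => if h' : (i : ℕ) < n then x ⟨i, h'⟩ else y ⟨(i : ℕ) - n, by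
    have := i.isLt; omega⟩)

set_option maxHeartbeats 1000000 in
/-- the auxiliary lemma. The set of points of `E₁` around which `E₁` is
`ε`-thin at some scale `≤ 1` has measure `≲ ε`. -/
theorem stmt5 (n d : ℕ) (hn : 1 ≤ n) (hnd : n < d) (c C₁ C₂ : ℝ) (hc : 0 < c) :
    ∃ K : ℝ, 0 < K ∧
      ∀ ε : ℝ, 0 < ε →
        ∀ E₀ E₁ : Set (Euc d), IsADR n C₁ C₂ E₀ → ENNReal.ofReal c ≤ μH[n] E₀ →
          MeasurableSet E₁ → E₁ ⊆ E₀ ∩ closedBall 0 1 →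
          μH[n] {x ∈ E₁ | ∃ r : ℝ, 0 < r ∧ r ≤ 1 ∧
              μH[n] (E₁ ∩ closedBall x r) ≤ ENNReal.ofReal (ε * r ^ n)} ≤
            ENNReal.ofReal (K * ε) := by
  classical
  refine ⟨(15:ℝ)^n * ((max C₂ 1)^2 * (1/c + 1)) * max (1/C₁) 1, by positivity, ?_⟩
  intro ε hε E₀ E₁ hADR hcE hE₁m hsub
  obtain ⟨hC₁, hC₁₂, hADRb⟩ := hADR
  have hC₂ : 0 < C₂ := lt_of_lt_of_le hC₁ hC₁₂
  set S := {x ∈ E₁ | ∃ r : ℝ, 0 < r ∧ r ≤ 1 ∧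
      μH[n] (E₁ ∩ closedBall x r) ≤ ENNReal.ofReal (ε * r ^ n)} with hSdef
  rcases S.eq_empty_or_nonempty with hS | hS
  · rw [hS]; simp
  obtain ⟨x₀, hx₀S⟩ := hS
  have hSE₁ : S ⊆ E₁ := fun x hx => hx.1
  have hE₁E₀ : E₁ ⊆ E₀ := fun x hx => (hsub hx).1
  have hE₁B : E₁ ⊆ closedBall 0 1 := fun x hx => (hsub hx).2
  have hx₀E₀ : x₀ ∈ E₀ := hE₁E₀ (hSE₁ hx₀S)
  -- choose radii
  have hsel : ∀ x ∈ S, ∃ r : ℝ, 0 < r ∧ r ≤ 1 ∧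
      μH[n] (E₁ ∩ closedBall x r) ≤ ENNReal.ofReal (ε * r ^ n) := fun x hx => hx.2
  choose! r hr0 hr1 hrμ using hsel
  -- diameter is positive
  haveI : NullSingletonClass (μH[(n:ℝ)] : Measure (Euc d)) :=
    MeasureTheory.Measure.noAtoms_hausdorff _ (by positivity)
  have hdiam : 0 < EMetric.diam E₀ := by
    by_contra h
    push_neg at h
    have hsub0 : E₀.Subsingleton := EMetric.diam_eq_zero_iff.1 (le_antisymm h (zero_le))
    rw [hsub0.measure_zero _] at hcE
    simp [ENNReal.ofReal_eq_zero] at hcE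
    linarith
  -- choose the scale D
  obtain ⟨D, hD0, hD1, hDdiam, hDc⟩ : ∃ D : ℝ, 0 < D ∧ D ≤ 1 ∧
      ENNReal.ofReal D ≤ EMetric.diam E₀ ∧ min 1 (c / C₂) ≤ D ^ n := by
    by_cases hbig : (1:ℝ≥0∞) ≤ EMetric.diam E₀
    · exact ⟨1, one_pos, le_rfl, by simpa using hbig, by simp [min_le_left]⟩
    · push_neg at hbig
      have hfin : EMetric.diam E₀ ≠ ∞ := (hbig.trans ENNReal.one_lt_top).ne
      set D := (EMetric.diam E₀).toReal with hDdef
      have hD0 : 0 < D := ENNReal.toReal_pos hdiam.ne' hfin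
      have hofD : ENNReal.ofReal D = EMetric.diam E₀ := ENNReal.ofReal_toReal hfin
      have hD1 : D ≤ 1 := by
        have := ENNReal.toReal_mono ENNReal.one_ne_top hbig.le
        simpa using this
      have hE₀sub : E₀ ⊆ closedBall x₀ D := by
        intro x hx
        have h1 : edist x x₀ ≤ EMetric.diam E₀ := EMetric.edist_le_diam_of_mem hx hx₀E₀
        rw [← hofD] at h1
        exact (edist_le_ofReal hD0.le).1 h1
      have hup := (hADRb x₀ hx₀E₀ D hD0 hofD.le).2
      rw [Set.inter_eq_self_of_subset_left hE₀sub] at hup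
      have hcC : c ≤ C₂ * D ^ n := by
        have := hcE.trans hup
        exact (ENNReal.ofReal_le_ofReal_iff (by positivity)).1 this
      have : c / C₂ ≤ D ^ n := (div_le_iff₀' hC₂).2 hcC
      exact ⟨D, hD0, hD1, hofD.le, le_trans (min_le_right _ _) this⟩
  have hDn0 : 0 < D ^ n := by positivity
  -- Vitali covering
  obtain ⟨u, huS, hdisj, hcov⟩ :=
    Vitali.exists_disjoint_subfamily_covering_enlargement_closedBall S id (fun a => r a / 5) 1
      (fun a ha => by have := hr1 a ha; have := hr0 a ha; linarith) 5 (by norm_num)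
  have hcnt : u.Countable := by
    have hd' : u.PairwiseDisjoint fun a => ball (id a) (r a / 5) :=
      hdisj.mono fun a => ball_subset_closedBall
    exact hd'.countable_of_isOpen (fun a _ => isOpen_ball)
      (fun a ha => nonempty_ball.2 (by have := hr0 a (huS ha); linarith))
  -- covering of S
  have hcover : S ⊆ ⋃ b ∈ u, (E₁ ∩ closedBall b (r b)) := by
    intro a ha
    obtain ⟨b, hb, hsub'⟩ := hcov a ha
    have h5 : (5:ℝ) * (r b / 5) = r b := by ring
    have ha' : a ∈ closedBall (id a) (r a / 5) :=
      mem_closedBall_self (by have := hr0 a ha; linarith)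
    refine mem_biUnion hb ⟨hSE₁ ha, ?_⟩
    have := hsub' ha'
    rwa [h5] at this
  -- the truncated radii
  set ρ : Euc d → ℝ := fun b => min (r b / 5) D with hρdef
  have hρ0 : ∀ b ∈ u, 0 < ρ b := fun b hb =>
    lt_min (by have := hr0 b (huS hb); linarith) hD0
  have hρD : ∀ b, ρ b ≤ D := fun b => min_le_right _ _
  have hρr : ∀ b, ρ b ≤ r b / 5 := fun b => min_le_left _ _
  have hρlow : ∀ b ∈ u, D * (r b / 5) ≤ ρ b := by
    intro b hb
    have h0 := hr0 b (huS hb)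
    have h1 := hr1 b (huS hb)
    rcases le_total (r b / 5) D with h | h
    · rw [hρdef]; simp only [min_eq_left h]
      nlinarith
    · rw [hρdef]; simp only [min_eq_right h]
      nlinarith
  -- restricted measure
  set ν : Measure (Euc d) := μH[(n:ℝ)].restrict E₀ with hνdef
  -- key per-ball estimate
  have hkey : ∀ b ∈ u, ENNReal.ofReal (ε * r b ^ n) ≤
      ENNReal.ofReal (ε * 5 ^ n / (C₁ * D ^ n)) * ν (closedBall b (ρ b)) := by
    intro b hb
    have hbE₀ : b ∈ E₀ := hE₁E₀ (hSE₁ (huS hb))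
    have hlow := (hADRb b hbE₀ (ρ b) (hρ0 b hb)
      ((ENNReal.ofReal_le_ofReal (hρD b)).trans hDdiam)).1
    have hν : ν (closedBall b (ρ b)) = μH[(n:ℝ)] (E₀ ∩ closedBall b (ρ b)) := by
      rw [hνdef, Measure.restrict_apply measurableSet_closedBall, Set.inter_comm]
    rw [hν]
    calc ENNReal.ofReal (ε * r b ^ n)
        = ENNReal.ofReal (ε * 5 ^ n / (C₁ * D ^ n)) *
            ENNReal.ofReal (C₁ * (D * (r b / 5)) ^ n) := by
          rw [← ENNReal.ofReal_mul (by positivity)]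
          congr 1
          field_simp
          rw [← mul_pow, ← mul_pow]; congr 1; ring
      _ ≤ ENNReal.ofReal (ε * 5 ^ n / (C₁ * D ^ n)) * ENNReal.ofReal (C₁ * ρ b ^ n) := by
          refine mul_le_mul_right (ENNReal.ofReal_le_ofReal ?_) _
          have hrb0 : 0 < r b := hr0 b (huS hb)
          have h1 : (D * (r b / 5)) ^ n ≤ ρ b ^ n :=
            pow_le_pow_left₀ (by positivity) (hρlow b hb) n
          nlinarith
      _ ≤ _ := mul_le_mul_right hlow _
  -- ρ-balls are pairwise disjoint and contained in a fixed ball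
  have hdisjρ : u.PairwiseDisjoint fun b => closedBall b (ρ b) :=
    hdisj.mono fun b => closedBall_subset_closedBall (hρr b)
  have hball3 : ∀ b ∈ u, closedBall b (ρ b) ⊆ closedBall x₀ 3 := by
    intro b hb y hy
    have h1 : dist y b ≤ ρ b := mem_closedBall.1 hy
    have h2 : dist b (0:Euc d) ≤ 1 := mem_closedBall.1 (hE₁B (hSE₁ (huS hb)))
    have h3 : dist x₀ (0:Euc d) ≤ 1 := mem_closedBall.1 (hE₁B (hSE₁ hx₀S))
    have h4 : ρ b ≤ 1 / 5 := le_trans (hρr b) (by have := hr1 b (huS hb); linarith)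
    have : dist y x₀ ≤ dist y b + dist b 0 + dist (0:Euc d) x₀ :=
      dist_triangle4 y b 0 x₀
    rw [dist_comm (0:Euc d) x₀] at this
    exact mem_closedBall.2 (by linarith)
  -- upper mass bound on the big ball
  have hup3 : μH[(n:ℝ)] (E₀ ∩ closedBall x₀ 3) ≤ ENNReal.ofReal (C₂ * 3 ^ n) := by
    by_cases h3 : ENNReal.ofReal 3 ≤ EMetric.diam E₀
    · exact (hADRb x₀ hx₀E₀ 3 (by norm_num) h3).2
    · push_neg at h3
      have hfin : EMetric.diam E₀ ≠ ∞ := (h3.trans ENNReal.ofReal_lt_top).ne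
      set t := (EMetric.diam E₀).toReal with htdef
      have ht0 : 0 < t := ENNReal.toReal_pos hdiam.ne' hfin
      have hoft : ENNReal.ofReal t = EMetric.diam E₀ := ENNReal.ofReal_toReal hfin
      have ht3 : t ≤ 3 := by
        have := ENNReal.toReal_mono (by simp) h3.le
        simpa [ENNReal.toReal_ofReal] using this
      have hE₀sub : E₀ ⊆ closedBall x₀ t := by
        intro x hx
        have h1 : edist x x₀ ≤ EMetric.diam E₀ := EMetric.edist_le_diam_of_mem hx hx₀E₀
        rw [← hoft] at h1
        exact (edist_le_ofReal ht0.le).1 h1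
      have hup := (hADRb x₀ hx₀E₀ t ht0 hoft.le).2
      rw [Set.inter_eq_self_of_subset_left hE₀sub] at hup
      calc μH[(n:ℝ)] (E₀ ∩ closedBall x₀ 3) ≤ μH[(n:ℝ)] E₀ := measure_mono inter_subset_left
        _ ≤ ENNReal.ofReal (C₂ * t ^ n) := hup
        _ ≤ ENNReal.ofReal (C₂ * 3 ^ n) := by
            apply ENNReal.ofReal_le_ofReal
            have : t ^ n ≤ 3 ^ n := pow_le_pow_left₀ ht0.le ht3 n
            nlinarith
  -- main chain
  have hsum : ν (⋃ b ∈ u, closedBall b (ρ b)) = ∑' b : u, ν (closedBall b (ρ b)) :=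
    measure_biUnion hcnt hdisjρ fun b _ => measurableSet_closedBall
  have hmain : μH[(n:ℝ)] S ≤
      ENNReal.ofReal (ε * 5 ^ n / (C₁ * D ^ n)) * ENNReal.ofReal (C₂ * 3 ^ n) := by
    calc μH[(n:ℝ)] S ≤ μH[(n:ℝ)] (⋃ b ∈ u, (E₁ ∩ closedBall b (r b))) := measure_mono hcover
      _ ≤ ∑' b : u, μH[(n:ℝ)] (E₁ ∩ closedBall (b:Euc d) (r b)) :=
          measure_biUnion_le _ hcnt _
      _ ≤ ∑' b : u, ENNReal.ofReal (ε * r (b:Euc d) ^ n) :=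
          ENNReal.tsum_le_tsum fun b => hrμ b (huS b.2)
      _ ≤ ∑' b : u, ENNReal.ofReal (ε * 5 ^ n / (C₁ * D ^ n)) * ν (closedBall (b:Euc d) (ρ b)) :=
          ENNReal.tsum_le_tsum fun b => hkey b b.2
      _ = ENNReal.ofReal (ε * 5 ^ n / (C₁ * D ^ n)) * ∑' b : u, ν (closedBall (b:Euc d) (ρ b)) :=
          ENNReal.tsum_mul_left
      _ = ENNReal.ofReal (ε * 5 ^ n / (C₁ * D ^ n)) * ν (⋃ b ∈ u, closedBall b (ρ b)) := by
          rw [hsum]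
      _ ≤ ENNReal.ofReal (ε * 5 ^ n / (C₁ * D ^ n)) * ν (closedBall x₀ 3) := by
          gcongr
          exact iUnion₂_subset hball3
      _ ≤ _ := by
          gcongr
          rw [hνdef, Measure.restrict_apply measurableSet_closedBall, Set.inter_comm]
          exact hup3
  refine hmain.trans ?_
  rw [← ENNReal.ofReal_mul (by positivity)]
  apply ENNReal.ofReal_le_ofReal
  -- real arithmetic
  have hCD : C₂ / D ^ n ≤ (max C₂ 1)^2 * (1/c + 1) := by
    have hm1 : (1:ℝ) ≤ max C₂ 1 := le_max_right _ _
    have hmC : C₂ ≤ max C₂ 1 := le_max_left _ _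
    rcases le_total (c / C₂) 1 with h | h
    · have hmin : min 1 (c / C₂) = c / C₂ := min_eq_right h
      rw [hmin] at hDc
      have hcC₂ : 0 < c / C₂ := by positivity
      have h1 : C₂ / D ^ n ≤ C₂ / (c / C₂) :=
        div_le_div_of_nonneg_left hC₂.le hcC₂ hDc
      have h2 : C₂ / (c / C₂) = C₂ ^ 2 * (1 / c) := by field_simp
      rw [h2] at h1
      refine h1.trans ?_
      have hsq : C₂ ^ 2 ≤ (max C₂ 1) ^ 2 := by nlinarith
      have h3 : C₂ ^ 2 * (1 / c) ≤ (max C₂ 1) ^ 2 * (1 / c) :=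
        mul_le_mul_of_nonneg_right hsq (by positivity)
      nlinarith [sq_nonneg (max C₂ 1), h3]
    · have hmin : min 1 (c / C₂) = 1 := min_eq_left h
      rw [hmin] at hDc
      have h1 : C₂ / D ^ n ≤ C₂ := by
        rw [div_le_iff₀ hDn0]; nlinarith
      refine h1.trans (hmC.trans ?_)
      have hinv : (1:ℝ) ≤ 1 / c + 1 := by
        have : (0:ℝ) ≤ 1 / c := by positivity
        linarith
      nlinarith [hm1, hinv]
  have hC₁inv : 1 / C₁ ≤ max (1/C₁) 1 := le_max_left _ _
  have heq : ε * 5 ^ n / (C₁ * D ^ n) * (C₂ * 3 ^ n)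
      = (15:ℝ)^n * (C₂ / D ^ n) * (1 / C₁) * ε := by
    rw [show (15:ℝ)^n = 5^n * 3^n by rw [← mul_pow]; norm_num]
    field_simp
  rw [heq]
  have h15 : (0:ℝ) < 15 ^ n := by positivity
  have hmax1 : (0:ℝ) < max (1/C₁) 1 := lt_max_of_lt_right one_pos
  have hprod : (15:ℝ)^n * (C₂ / D ^ n) * (1 / C₁) ≤
      (15:ℝ)^n * ((max C₂ 1)^2 * (1/c + 1)) * max (1/C₁) 1 := by
    have hCDpos : 0 ≤ C₂ / D ^ n := by positivity
    have hC₁invpos : 0 ≤ 1 / C₁ := by positivity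
    gcongr
  exact mul_le_mul_of_nonneg_right hprod hε.le


end
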